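/- (Exactness in the main example.) The sequence 0 ← F̄_{A′} ←(j*)− F̄^I_{A′} ←(∇*)− F̄^{M I}_{A′} is exact: the map j*, (j*f)_α = Σ_i (−1)^{|i|} D^i(f^i_α), is surjective onto F̄_{A′}, and ker j* = im ∇*, where (∇*χ)^i_α = Σ_μ ( D_μ χ^{μ i}_α + χ^{μ, i−e_μ}_α ) with terms having i^μ = 0 omitted. In particular j* ∘ ∇* = 0, and the quotient F̄^I_{A′} / im ∇* is isomorphic to F̄_{A′}. -/

import Mathlib

set_option linter.unusedSectionVars false


noncomputable section

variable {𝔽 : Type*} [Field 𝔽] {F : Type*} [CommRing F] [Algebra 𝔽 F] {m : ℕ}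
  {A A' : Type*}

/-- Membership in the space of divergences `Div F^M = {Σ_μ D_μ ψ^μ}`. -/
def IsDiv (D : Fin m → Derivation 𝔽 F F) (f : F) : Prop :=
  ∃ ψ : Fin m → F, f = ∑ μ, D μ (ψ μ)

/-- The evolutionary differentiation `ev_φ f = Σ_a φ^a · ∂_a f` (a finite sum). -/
def ev (pa : A → Derivation 𝔽 F F) (φ : A → F) (f : F) : F :=
  ∑ᶠ a, φ a * pa a f

/-- `(∇φ)^a_μ = D_μ φ^a + Σ_b Γ^a_{μb} · φ^b`; here `Γ b μ a` denotes `Γ^b_{μa}`. -/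
def nabla (D : Fin m → Derivation 𝔽 F F) (Γ : A → Fin m → A → F)
    (φ : A → F) (a : A) (μ : Fin m) : F :=
  D μ (φ a) + ∑ᶠ b, Γ a μ b * φ b

/-- `(∇*χ)_a = -Σ_μ D_μ χ^μ_a + Σ_{μ,b} Γ^b_{μa} · χ^μ_b`. -/
def nablaStar (D : Fin m → Derivation 𝔽 F F) (Γ : A → Fin m → A → F)
    (χ : Fin m → A → F) (a : A) : F :=
  -∑ μ, D μ (χ μ a) + ∑ᶠ b, ∑ μ, Γ b μ a * χ μ b

/-- The pairing `⟨f, φ⟩ = Σ_a f_a · φ^a`. -/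
def pair (f φ : A → F) : F := ∑ᶠ a, f a * φ a

/-- `D^i = D_1^{i^1} ∘ ⋯ ∘ D_m^{i^m}`. -/
def Dpow (D : Fin m → Derivation 𝔽 F F) (i : Fin m → ℕ) : F → F :=
  (List.finRange m).foldr (fun μ g => (⇑(D μ))^[i μ] ∘ g) id

/-- `|i| = i^1 + ⋯ + i^m`. -/
def msize {m : ℕ} (i : Fin m → ℕ) : ℕ := ∑ μ, i μ

/-- The differential operator `P(D)L = Σ_i P_i · D^i L`. -/
def applyP (D : Fin m → Derivation 𝔽 F F) (P : (Fin m → ℕ) → F) (L : F) : F :=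
  ∑ᶠ i, P i * Dpow D i L

/-- The Lagrange dual operator `P*(D)K = Σ_i (-1)^{|i|} D^i (P_i · K)`. -/
def applyPstar (D : Fin m → Derivation 𝔽 F F) (P : (Fin m → ℕ) → F) (K : F) : F :=
  ∑ᶠ i, (-1 : F) ^ msize i * Dpow D i (P i * K)

/-- The jet map `(jφ)^a = Σ_{i,α} j^a_{iα} · D^i φ^α`; here `jc a i α` denotes `j^a_{iα}`. -/
def jmap (D : Fin m → Derivation 𝔽 F F) (jc : A → (Fin m → ℕ) → A' → F)
    (φ : A' → F) (a : A) : F :=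
  ∑ᶠ i, ∑ᶠ α, jc a i α * Dpow D i (φ α)

/-- The Lagrange dual `(j*f)_α = Σ_{a,i} (-1)^{|i|} D^i (j^a_{iα} · f_a)`. -/
def jstar (D : Fin m → Derivation 𝔽 F F) (jc : A → (Fin m → ℕ) → A' → F)
    (f : A → F) (α : A') : F :=
  ∑ᶠ a, ∑ᶠ i, (-1 : F) ^ msize i * Dpow D i (jc a i α * f a)

/-- `(Λf)^α = Σ_{β,i} Λ^{αβ}_i · D^i f_β`; here `Λc α β i` denotes `Λ^{αβ}_i`. -/
def Lam (D : Fin m → Derivation 𝔽 F F) (Λc : A' → A' → (Fin m → ℕ) → F)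
    (f : A' → F) (α : A') : F :=
  ∑ᶠ β, ∑ᶠ i, Λc α β i * Dpow D i (f β)

/-- The Lagrange dual `(Λ*f)^α = Σ_{β,i} (-1)^{|i|} D^i (Λ^{βα}_i · f_β)`. -/
def LamStar (D : Fin m → Derivation 𝔽 F F) (Λc : A' → A' → (Fin m → ℕ) → F)
    (f : A' → F) (α : A') : F :=
  ∑ᶠ β, ∑ᶠ i, (-1 : F) ^ msize i * Dpow D i (Λc β α i * f β)

/-- The variational derivative `δR = j*(∂R)`, where `∂R = (∂_a R)`. -/
def vard (D : Fin m → Derivation 𝔽 F F) (pa : A → Derivation 𝔽 F F)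
    (jc : A → (Fin m → ℕ) → A' → F) (R : F) : A' → F :=
  jstar D jc (fun a => pa a R)

/-- The Hamiltonian vector `φ(R) = j(Λ(δR))`. -/
def hamv (D : Fin m → Derivation 𝔽 F F) (pa : A → Derivation 𝔽 F F)
    (jc : A → (Fin m → ℕ) → A' → F) (Λc : A' → A' → (Fin m → ℕ) → F) (R : F) : A → F :=
  jmap D jc (Lam D Λc (vard D pa jc R))

/-- The commutator `[ev_ψ, Λ]`, acting with coefficients `ev_ψ(Λ^{αβ}_i)`. -/
def evLam (D : Fin m → Derivation 𝔽 F F) (pa : A → Derivation 𝔽 F F)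
    (Λc : A' → A' → (Fin m → ℕ) → F) (ψ : A → F) (f : A' → F) (α : A') : F :=
  ∑ᶠ β, ∑ᶠ i, ev pa ψ (Λc α β i) * Dpow D i (f β)

/-- In the main example: `(j*f)_α = Σ_i (-1)^{|i|} D^i (f^i_α)`. -/
def jstarEx {𝔽 : Type*} [Field 𝔽] {F : Type*} [CommRing F] [Algebra 𝔽 F] {m : ℕ}
    {A' : Type*} (D : Fin m → Derivation 𝔽 F F)
    (f : (Fin m → ℕ) → A' → F) (α : A') : F :=
  ∑ᶠ i, (-1 : F) ^ msize i * Dpow D i (f i α)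

/-- In the main example: `(∇*χ)^i_α = Σ_μ (D_μ χ^{μ,i}_α + χ^{μ,i-e_μ}_α)`,
the term `χ^{μ,i-e_μ}_α` being omitted when `i^μ = 0`. -/
def nablaStarEx {𝔽 : Type*} [Field 𝔽] {F : Type*} [CommRing F] [Algebra 𝔽 F] {m : ℕ}
    {A' : Type*} (D : Fin m → Derivation 𝔽 F F)
    (χ : Fin m → (Fin m → ℕ) → A' → F) (i : Fin m → ℕ) (α : A') : F :=
  ∑ μ, (D μ (χ μ i α)
    + if i μ = 0 then 0 else χ μ (Function.update i μ (i μ - 1)) α)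

section Aux

open Function

variable {F : Type*} [CommRing F] [Algebra ℚ F] {m : ℕ} {A' : Type*}

lemma iterD_zero (d : Derivation ℚ F F) (k : ℕ) : (⇑d)^[k] (0 : F) = 0 := by
  induction k with
  | zero => rfl
  | succ n ih => rw [Function.iterate_succ_apply', ih, map_zero]

lemma iterD_add (d : Derivation ℚ F F) (k : ℕ) (x y : F) :
    (⇑d)^[k] (x + y) = (⇑d)^[k] x + (⇑d)^[k] y := by
  induction k generalizing x y with
  | zero => rfl
  | succ n ih =>
    rw [Function.iterate_succ_apply', Function.iterate_succ_apply',
      Function.iterate_succ_apply', ih, map_add]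

lemma iterD_comm (d e : Derivation ℚ F F) (h : ∀ x, d (e x) = e (d x)) (k : ℕ) (x : F) :
    d ((⇑e)^[k] x) = (⇑e)^[k] (d x) := by
  induction k generalizing x with
  | zero => rfl
  | succ n ih =>
    rw [Function.iterate_succ_apply', Function.iterate_succ_apply', h, ih]

/-- foldr form of `Dpow` over an arbitrary list. -/
def FD (D : Fin m → Derivation ℚ F F) (l : List (Fin m)) (i : Fin m → ℕ) : F → F :=
  l.foldr (fun μ g => (⇑(D μ))^[i μ] ∘ g) id

variable (D : Fin m → Derivation ℚ F F)

lemma Dpow_eq_FD (i : Fin m → ℕ) : Dpow D i = FD D (List.finRange m) i := rfl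

lemma FD_cons (μ : Fin m) (l : List (Fin m)) (i : Fin m → ℕ) :
    FD D (μ :: l) i = (⇑(D μ))^[i μ] ∘ FD D l i := rfl

lemma FD_zero (l : List (Fin m)) (i : Fin m → ℕ) : FD D l i (0 : F) = 0 := by
  induction l with
  | nil => rfl
  | cons μ t ih => rw [FD_cons]; simp only [Function.comp_apply, ih, iterD_zero]

lemma FD_add (l : List (Fin m)) (i : Fin m → ℕ) (x y : F) :
    FD D l i (x + y) = FD D l i x + FD D l i y := by
  induction l with
  | nil => rfl
  | cons μ t ih => rw [FD_cons]; simp only [Function.comp_apply, ih, iterD_add]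

lemma FD_congr (l : List (Fin m)) {i j : Fin m → ℕ} (h : ∀ μ ∈ l, i μ = j μ) (x : F) :
    FD D l i x = FD D l j x := by
  induction l with
  | nil => rfl
  | cons μ t ih =>
    rw [FD_cons, FD_cons]
    simp only [Function.comp_apply]
    rw [ih (fun ν hν => h ν (List.mem_cons_of_mem _ hν)), h μ List.mem_cons_self]

variable (hDcomm : ∀ μ ν (f : F), D μ (D ν f) = D ν (D μ f))

include hDcomm

lemma FD_D_comm (l : List (Fin m)) (i : Fin m → ℕ) (ν : Fin m) (x : F) :
    D ν (FD D l i x) = FD D l i (D ν x) := by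
  induction l generalizing x with
  | nil => rfl
  | cons μ t ih =>
    rw [FD_cons]
    simp only [Function.comp_apply]
    rw [iterD_comm (D ν) (D μ) (fun y => hDcomm ν μ y) (i μ), ih]

lemma FD_update (l : List (Fin m)) (μ : Fin m) (hc : l.count μ = 1) (i : Fin m → ℕ) (x : F) :
    FD D l (Function.update i μ (i μ + 1)) x = D μ (FD D l i x) := by
  induction l generalizing x with
  | nil => simp at hc
  | cons ν t ih =>
    by_cases hνμ : ν = μ
    · subst hνμ
      have ht : ν ∉ t := by
        have h2 : List.count ν (ν :: t) = List.count ν t + 1 := List.count_cons_self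
        rw [hc] at h2
        have : List.count ν t = 0 := by omega
        exact List.count_eq_zero.mp this
      rw [FD_cons, FD_cons]
      simp only [Function.comp_apply, Function.update_self]
      rw [FD_congr D t (fun ρ hρ => Function.update_of_ne (by rintro rfl; exact ht hρ) _ _),
        Function.iterate_succ_apply']
    · have hct : t.count μ = 1 := by
        rw [List.count_cons_of_ne hνμ] at hc
        exact hc
      rw [FD_cons, FD_cons]
      simp only [Function.comp_apply, Function.update_of_ne hνμ]
      rw [ih hct, iterD_comm (D μ) (D ν) (fun y => hDcomm μ ν y) (i ν)]

omit hDcomm in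
lemma FD_zero_index (l : List (Fin m)) {i : Fin m → ℕ} (h : ∀ μ ∈ l, i μ = 0) (x : F) :
    FD D l i x = x := by
  induction l with
  | nil => rfl
  | cons μ t ih =>
    rw [FD_cons]
    simp only [Function.comp_apply, h μ List.mem_cons_self, Function.iterate_zero, id]
    exact ih (fun ν hν => h ν (List.mem_cons_of_mem _ hν))

omit hDcomm in
lemma Dpow_zero_apply (i : Fin m → ℕ) : Dpow D i (0 : F) = 0 := FD_zero D _ i

omit hDcomm in
lemma Dpow_add (i : Fin m → ℕ) (x y : F) :
    Dpow D i (x + y) = Dpow D i x + Dpow D i y := FD_add D _ i x y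

omit hDcomm in
lemma Dpow_neg (i : Fin m → ℕ) (x : F) : Dpow D i (-x) = -Dpow D i x := by
  have h := Dpow_add D i (-x) x
  rw [neg_add_cancel, Dpow_zero_apply] at h
  exact eq_neg_of_add_eq_zero_left h.symm

omit hDcomm in
lemma Dpow_sum {β : Type*} (i : Fin m → ℕ) (s : Finset β) (g : β → F) :
    Dpow D i (∑ b ∈ s, g b) = ∑ b ∈ s, Dpow D i (g b) := by
  classical
  induction s using Finset.induction with
  | empty => simp [Dpow_zero_apply]
  | insert _ _ h ih => rw [Finset.sum_insert h, Finset.sum_insert h, Dpow_add, ih]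

omit hDcomm in
lemma Dpow_of_zero_index {i : Fin m → ℕ} (h : ∀ μ, i μ = 0) (x : F) : Dpow D i x = x :=
  FD_zero_index D _ (fun μ _ => h μ) x

lemma Dpow_D_comm (i : Fin m → ℕ) (ν : Fin m) (x : F) :
    D ν (Dpow D i x) = Dpow D i (D ν x) := FD_D_comm D hDcomm _ i ν x

lemma Dpow_succ (i : Fin m → ℕ) (μ : Fin m) (x : F) :
    Dpow D (Function.update i μ (i μ + 1)) x = D μ (Dpow D i x) :=
  FD_update D hDcomm _ μ
    (List.count_eq_one_of_mem (List.nodup_finRange m) (List.mem_finRange μ)) i x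

end Aux

section MsizeAux

lemma msize_update_succ {m : ℕ} (i : Fin m → ℕ) (μ : Fin m) :
    msize (Function.update i μ (i μ + 1)) = msize i + 1 := by
  classical
  have h1 : msize (Function.update i μ (i μ + 1)) = (i μ + 1) + ∑ ν ∈ Finset.univ \ {μ}, i ν := by
    unfold msize; rw [Finset.sum_update_of_mem (Finset.mem_univ μ)]
  have h2 : msize i = i μ + ∑ ν ∈ Finset.univ \ {μ}, i ν := by
    unfold msize
    rw [Finset.sdiff_singleton_eq_erase, ← Finset.add_sum_erase _ _ (Finset.mem_univ μ)]
  omega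

lemma msize_eq_zero_iff {m : ℕ} (i : Fin m → ℕ) : msize i = 0 ↔ i = fun _ => 0 := by
  unfold msize
  rw [Finset.sum_eq_zero_iff]
  constructor
  · intro h; funext μ; exact h μ (Finset.mem_univ μ)
  · intro h μ _; rw [h]

lemma update_up_down {m : ℕ} (i : Fin m → ℕ) (μ : Fin m) :
    Function.update (Function.update i μ (i μ + 1)) μ
      (Function.update i μ (i μ + 1) μ - 1) = i := by
  simp [Function.update_self, Function.update_idem]

lemma update_down_up {m : ℕ} (i : Fin m → ℕ) (μ : Fin m) (h : i μ ≠ 0) :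
    Function.update (Function.update i μ (i μ - 1)) μ
      (Function.update i μ (i μ - 1) μ + 1) = i := by
  simp only [Function.update_self, Function.update_idem]
  rw [Nat.sub_add_cancel (Nat.one_le_iff_ne_zero.mpr h), Function.update_eq_self]

lemma shift_injective {m : ℕ} (μ : Fin m) :
    Function.Injective (fun i : Fin m → ℕ => Function.update i μ (i μ + 1)) := by
  intro a b h
  have h2 := congrArg (fun j : Fin m → ℕ => Function.update j μ (j μ - 1)) h
  simpa [Function.update_idem, Function.update_self, Function.update_eq_self] using h2

lemma shift_range {m : ℕ} (μ : Fin m) :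
    Set.range (fun i : Fin m → ℕ => Function.update i μ (i μ + 1)) = {i | i μ ≠ 0} := by
  ext i
  constructor
  · rintro ⟨j, rfl⟩
    simp [Function.update_self]
  · intro h
    exact ⟨Function.update i μ (i μ - 1), update_down_up i μ h⟩

end MsizeAux

section Parts

open Function

variable {F : Type*} [CommRing F] [Algebra ℚ F] {m : ℕ} {A' : Type*}
variable (D : Fin m → Derivation ℚ F F)

lemma slice_finite {f : (Fin m → ℕ) → A' → F}
    (hf : {p : (Fin m → ℕ) × A' | f p.1 p.2 ≠ 0}.Finite) (α : A') :
    (Function.support fun i => f i α).Finite :=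
  Set.Finite.subset (hf.image Prod.fst) (fun i hi => ⟨(i, α), hi, rfl⟩)

lemma slice3_finite {χ : Fin m → (Fin m → ℕ) → A' → F}
    (hχ : {p : Fin m × (Fin m → ℕ) × A' | χ p.1 p.2.1 p.2.2 ≠ 0}.Finite) (μ : Fin m) (α : A') :
    (Function.support fun i => χ μ i α).Finite :=
  Set.Finite.subset (hχ.image fun p => p.2.1) (fun i hi => ⟨(μ, i, α), hi, rfl⟩)

lemma term_support (h : (Fin m → ℕ) → F) :
    (Function.support fun i => (-1:F)^(msize i) * Dpow D i (h i)) ⊆ Function.support h := by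
  intro i hi
  simp only [Function.mem_support] at hi ⊢
  intro h0
  apply hi
  rw [h0, Dpow_zero_apply, mul_zero]

lemma jstarEx_single {f : (Fin m → ℕ) → A' → F} {α : A'}
    (hf : ∀ i, i ≠ (fun _ => 0) → f i α = 0) :
    jstarEx D f α = f (fun _ => 0) α := by
  unfold jstarEx
  rw [finsum_eq_single _ (fun _ => 0)]
  · rw [Dpow_of_zero_index D (fun _ => rfl)]
    have h0 : msize (fun _ : Fin m => (0:ℕ)) = 0 := (msize_eq_zero_iff _).mpr rfl
    rw [h0, pow_zero, one_mul]
  · intro i hi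
    rw [hf i hi, Dpow_zero_apply, mul_zero]

lemma jstarEx_add {f g : (Fin m → ℕ) → A' → F} {α : A'}
    (hf : (Function.support fun i => f i α).Finite)
    (hg : (Function.support fun i => g i α).Finite) :
    jstarEx D (fun i β => f i β + g i β) α = jstarEx D f α + jstarEx D g α := by
  unfold jstarEx
  rw [← finsum_add_distrib (hf.subset (term_support D _)) (hg.subset (term_support D _))]
  exact finsum_congr fun i => by rw [Dpow_add, mul_add]

lemma part2 (hDcomm : ∀ μ ν (f : F), D μ (D ν f) = D ν (D μ f))
    (χ : Fin m → (Fin m → ℕ) → A' → F)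
    (hχ : {p : Fin m × (Fin m → ℕ) × A' | χ p.1 p.2.1 p.2.2 ≠ 0}.Finite)
    (α : A') : jstarEx D (nablaStarEx D χ) α = 0 := by
  classical
  have hs1 : ∀ μ : Fin m,
      (Function.support fun i => (-1:F)^(msize i) * Dpow D i (D μ (χ μ i α))).Finite := by
    intro μ
    refine ((slice3_finite hχ μ α).subset ?_).subset (term_support D _)
    intro i hi
    simp only [Function.mem_support] at hi ⊢
    intro h0
    apply hi
    rw [h0, map_zero]
  have hs2 : ∀ μ : Fin m,
      (Function.support fun i => (-1:F)^(msize i) * Dpow D i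
        (if i μ = 0 then 0 else χ μ (Function.update i μ (i μ - 1)) α)).Finite := by
    intro μ
    refine ((slice3_finite hχ μ α).image
      (fun i => Function.update i μ (i μ + 1))).subset ?_
    intro i hi
    have hi2 := term_support D _ hi
    simp only [Function.mem_support] at hi2
    by_cases h0 : i μ = 0
    · exact absurd (by rw [if_pos h0]) hi2
    · refine ⟨Function.update i μ (i μ - 1), ?_, update_down_up i μ h0⟩
      simp only [Function.mem_support]
      intro hc
      apply hi2
      rw [if_neg h0, hc]
  unfold jstarEx
  have step1 : ∀ i : Fin m → ℕ, (-1:F)^(msize i) * Dpow D i (nablaStarEx D χ i α)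
      = ∑ μ : Fin m, ((-1:F)^(msize i) * Dpow D i (D μ (χ μ i α))
        + (-1:F)^(msize i) * Dpow D i
          (if i μ = 0 then 0 else χ μ (Function.update i μ (i μ - 1)) α)) := by
    intro i
    unfold nablaStarEx
    rw [Dpow_sum, Finset.mul_sum]
    exact Finset.sum_congr rfl fun μ _ => by rw [Dpow_add, mul_add]
  rw [finsum_congr step1, finsum_sum_comm _ _
    (fun μ _ => (((hs1 μ).union (hs2 μ)).subset (Function.support_add _ _)))]
  refine Finset.sum_eq_zero fun μ _ => ?_
  rw [finsum_add_distrib (hs1 μ) (hs2 μ)]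
  have h0 : (∑ᶠ i, (-1:F)^(msize i) * Dpow D i
      (if i μ = 0 then 0 else χ μ (Function.update i μ (i μ - 1)) α))
      = ∑ᶠ i ∈ Set.range (fun j : Fin m → ℕ => Function.update j μ (j μ + 1)),
        (-1:F)^(msize i) * Dpow D i
          (if i μ = 0 then 0 else χ μ (Function.update i μ (i μ - 1)) α) := by
    rw [← finsum_mem_univ]
    apply finsum_mem_inter_support_eq
    ext i
    simp only [Set.mem_inter_iff, Set.mem_univ, true_and, Function.mem_support,
      shift_range, Set.mem_setOf_eq]
    constructor
    · intro hi
      refine ⟨?_, hi⟩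
      intro hz
      apply hi
      rw [if_pos hz, Dpow_zero_apply, mul_zero]
    · exact fun h => h.2
  rw [h0, finsum_mem_range (shift_injective μ)]
  have h1 : ∀ j : Fin m → ℕ,
      (-1:F)^(msize (Function.update j μ (j μ + 1)))
        * Dpow D (Function.update j μ (j μ + 1))
          (if Function.update j μ (j μ + 1) μ = 0 then 0
           else χ μ (Function.update (Function.update j μ (j μ + 1)) μ
             (Function.update j μ (j μ + 1) μ - 1)) α)
      = -((-1:F)^(msize j) * Dpow D j (D μ (χ μ j α))) := by
    intro j
    have hμ : Function.update j μ (j μ + 1) μ ≠ 0 := by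
      simp [Function.update_self]
    rw [if_neg hμ, update_up_down, msize_update_succ, pow_succ,
      Dpow_succ D hDcomm, ← Dpow_D_comm D hDcomm]
    ring
  rw [finsum_congr h1, finsum_neg_distrib]
  exact add_neg_cancel _

end Parts

section Part3

open Function

variable {F : Type*} [CommRing F] [Algebra ℚ F] {m : ℕ} {A' : Type*}
variable (D : Fin m → Derivation ℚ F F)

lemma nablaStarEx_zero (i : Fin m → ℕ) (α : A') :
    nablaStarEx D (fun _ _ _ => (0:F)) i α = 0 := by
  unfold nablaStarEx
  simp

lemma nablaStarEx_add (χ χ' : Fin m → (Fin m → ℕ) → A' → F) (i : Fin m → ℕ) (α : A') :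
    nablaStarEx D (fun μ k β => χ μ k β + χ' μ k β) i α
      = nablaStarEx D χ i α + nablaStarEx D χ' i α := by
  unfold nablaStarEx
  rw [← Finset.sum_add_distrib]
  refine Finset.sum_congr rfl fun μ _ => ?_
  rw [map_add]
  by_cases h : i μ = 0
  · simp only [if_pos h]; ring
  · simp only [if_neg h]; ring

lemma nablaStarEx_support (χ : Fin m → (Fin m → ℕ) → A' → F)
    (hχ : {p : Fin m × (Fin m → ℕ) × A' | χ p.1 p.2.1 p.2.2 ≠ 0}.Finite) :
    {p : (Fin m → ℕ) × A' | nablaStarEx D χ p.1 p.2 ≠ 0}.Finite := by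
  classical
  apply Set.Finite.subset ((hχ.image (fun p => (p.2.1, p.2.2))).union
    (hχ.image (fun p => (Function.update p.2.1 p.1 (p.2.1 p.1 + 1), p.2.2))))
  rintro ⟨i, α⟩ hp
  simp only [Set.mem_setOf_eq] at hp
  obtain ⟨μ, -, hμ⟩ := Finset.exists_ne_zero_of_sum_ne_zero hp
  by_cases h1 : χ μ i α = 0
  · right
    have h2 : i μ ≠ 0 ∧ χ μ (Function.update i μ (i μ - 1)) α ≠ 0 := by
      by_cases h0 : i μ = 0
      · exfalso; apply hμ; rw [h1, map_zero, if_pos h0, add_zero]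
      · refine ⟨h0, fun hc => ?_⟩
        apply hμ; rw [h1, map_zero, if_neg h0, hc, add_zero]
    exact ⟨(μ, Function.update i μ (i μ - 1), α), h2.2, by
      simp only [update_down_up i μ h2.1]⟩
  · exact Or.inl ⟨(μ, i, α), h1, rfl⟩

lemma part3_aux (hDcomm : ∀ μ ν (f : F), D μ (D ν f) = D ν (D μ f)) :
    ∀ n : ℕ, ∀ f : (Fin m → ℕ) → A' → F,
    {p : (Fin m → ℕ) × A' | f p.1 p.2 ≠ 0}.Finite →
    (∀ i α, n ≤ msize i → f i α = 0) →
    (∀ α, jstarEx D f α = 0) →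
    ∃ χ : Fin m → (Fin m → ℕ) → A' → F,
      {p : Fin m × (Fin m → ℕ) × A' | χ p.1 p.2.1 p.2.2 ≠ 0}.Finite ∧
      ∀ (i : Fin m → ℕ) (α : A'), f i α = nablaStarEx D χ i α := by
  classical
  intro n
  induction n with
  | zero =>
    intro f hf hb hker
    refine ⟨fun _ _ _ => 0, by simp, fun i α => ?_⟩
    rw [nablaStarEx_zero, hb i α (Nat.zero_le _)]
  | succ n ih =>
    intro f hf hb hker
    by_cases hn : n = 0
    · subst hn
      have hz : ∀ i α, f i α = 0 := by
        intro i α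
        by_cases h0 : i = (fun _ => 0)
        · subst h0
          have hk := hker α
          rwa [jstarEx_single D (fun j hj => hb j α
            (Nat.one_le_iff_ne_zero.mpr (fun h => hj ((msize_eq_zero_iff j).mp h))))] at hk
        · exact hb i α (Nat.one_le_iff_ne_zero.mpr (fun h => h0 ((msize_eq_zero_iff i).mp h)))
      exact ⟨fun _ _ _ => 0, by simp, fun i α => by rw [nablaStarEx_zero, hz]⟩
    · set χ1 : Fin m → (Fin m → ℕ) → A' → F := fun μ k β =>
        if (msize k + 1 = n ∧ ∀ ν, ν < μ → k ν = 0)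
        then f (Function.update k μ (k μ + 1)) β else 0 with hχ1def
      have hχ1fin : {p : Fin m × (Fin m → ℕ) × A' | χ1 p.1 p.2.1 p.2.2 ≠ 0}.Finite := by
        apply Set.Finite.subset ((((Set.finite_univ : (Set.univ : Set (Fin m)).Finite)).prod hf).image
          (fun q : Fin m × ((Fin m → ℕ) × A') =>
            (q.1, Function.update q.2.1 q.1 (q.2.1 q.1 - 1), q.2.2)))
        rintro ⟨μ, k, β⟩ hp
        simp only [Set.mem_setOf_eq, hχ1def] at hp
        by_cases hc : msize k + 1 = n ∧ ∀ ν, ν < μ → k ν = 0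
        · rw [if_pos hc] at hp
          refine ⟨(μ, (Function.update k μ (k μ + 1), β)), ⟨Set.mem_univ _, hp⟩, ?_⟩
          simp only [update_up_down]
        · rw [if_neg hc] at hp; exact absurd rfl hp
      have claimA : ∀ (j : Fin m → ℕ) (α : A'), msize j = n →
          nablaStarEx D χ1 j α = f j α := by
        intro j α hj
        unfold nablaStarEx
        have hD : ∀ μ, χ1 μ j α = 0 := fun μ => by
          rw [hχ1def]; simp only; rw [if_neg]; rintro ⟨hc, -⟩; omega
        have hex : ∃ μ, j μ ≠ 0 := by
          by_contra hno; push_neg at hno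
          have h0 : msize j = 0 := (msize_eq_zero_iff j).mpr (funext hno)
          omega
        set s : Finset (Fin m) := Finset.univ.filter (fun μ => j μ ≠ 0) with hs_def
        have hs : s.Nonempty := by
          obtain ⟨μ, hμ⟩ := hex
          exact ⟨μ, Finset.mem_filter.mpr ⟨Finset.mem_univ _, hμ⟩⟩
        set μ0 := s.min' hs with hμ0def
        have hμ0 : j μ0 ≠ 0 := (Finset.mem_filter.mp (s.min'_mem hs)).2
        have hlt : ∀ ν, ν < μ0 → j ν = 0 := by
          intro ν hν
          by_contra hc
          exact absurd (s.min'_le ν (Finset.mem_filter.mpr ⟨Finset.mem_univ _, hc⟩))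
            (not_le.mpr hν)
        rw [Finset.sum_eq_single μ0]
        · rw [hD μ0, map_zero, zero_add, if_neg hμ0, hχ1def]
          simp only
          rw [if_pos, update_down_up j μ0 hμ0]
          constructor
          · have hms := msize_update_succ (Function.update j μ0 (j μ0 - 1)) μ0
            rw [update_down_up j μ0 hμ0] at hms
            omega
          · intro ν hν
            rw [Function.update_of_ne (ne_of_lt hν)]
            exact hlt ν hν
        · intro μ _ hμne
          rw [hD μ, map_zero, zero_add]
          by_cases h0 : j μ = 0
          · rw [if_pos h0]
          · rw [if_neg h0, hχ1def]
            simp only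
            rw [if_neg]
            rintro ⟨-, hall⟩
            have hμs : μ ∈ s := Finset.mem_filter.mpr ⟨Finset.mem_univ _, h0⟩
            rcases lt_or_eq_of_le (s.min'_le μ hμs) with hlt2 | heq
            · have hv := hall μ0 hlt2
              rw [Function.update_of_ne (ne_of_lt hlt2)] at hv
              exact hμ0 hv
            · exact hμne heq.symm
        · exact fun h => absurd (Finset.mem_univ μ0) h
      have claimB : ∀ (j : Fin m → ℕ) (α : A'), n < msize j →
          nablaStarEx D χ1 j α = 0 := by
        intro j α hj
        unfold nablaStarEx
        refine Finset.sum_eq_zero fun μ _ => ?_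
        have h1 : χ1 μ j α = 0 := by
          rw [hχ1def]; simp only; rw [if_neg]; rintro ⟨hc, -⟩; omega
        have h2 : (if j μ = 0 then 0 else χ1 μ (Function.update j μ (j μ - 1)) α) = 0 := by
          by_cases h0 : j μ = 0
          · rw [if_pos h0]
          · rw [if_neg h0, hχ1def]
            simp only
            rw [if_neg]
            rintro ⟨hc, -⟩
            have hms := msize_update_succ (Function.update j μ (j μ - 1)) μ
            rw [update_down_up j μ h0] at hms
            omega
        rw [h1, h2, map_zero, add_zero]
      set f' : (Fin m → ℕ) → A' → F := fun i α => f i α - nablaStarEx D χ1 i α with hf'def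
      have hf'fin : {p : (Fin m → ℕ) × A' | f' p.1 p.2 ≠ 0}.Finite := by
        apply Set.Finite.subset (hf.union (nablaStarEx_support D χ1 hχ1fin))
        rintro ⟨i, α⟩ hp
        simp only [Set.mem_setOf_eq, Set.mem_union, hf'def] at hp ⊢
        by_contra hc
        push_neg at hc
        exact hp (by rw [hc.1, hc.2, sub_zero])
      have hf'b : ∀ i α, n ≤ msize i → f' i α = 0 := by
        intro i α hi
        rcases eq_or_lt_of_le hi with he | hl
        · rw [hf'def]; simp only; rw [claimA i α he.symm, sub_self]
        · rw [hf'def]; simp only; rw [claimB i α hl, hb i α (by omega), sub_zero]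
      have hf'ker : ∀ α, jstarEx D f' α = 0 := by
        intro α
        have hsplit : jstarEx D f α
            = jstarEx D f' α + jstarEx D (nablaStarEx D χ1) α := by
          rw [← jstarEx_add D (slice_finite hf'fin α)
            (slice_finite (nablaStarEx_support D χ1 hχ1fin) α)]
          congr 1
          funext i β
          rw [hf'def]
          ring
        rw [hker α, part2 D hDcomm χ1 hχ1fin α, add_zero] at hsplit
        exact hsplit.symm
      obtain ⟨χ2, hχ2fin, hχ2⟩ := ih f' hf'fin hf'b hf'ker
      refine ⟨fun μ k β => χ1 μ k β + χ2 μ k β, ?_, ?_⟩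
      · apply Set.Finite.subset (hχ1fin.union hχ2fin)
        rintro ⟨μ, k, β⟩ hp
        simp only [Set.mem_setOf_eq, Set.mem_union] at hp ⊢
        by_contra hc
        push_neg at hc
        exact hp (by rw [hc.1, hc.2, add_zero])
      · intro i α
        rw [nablaStarEx_add, ← hχ2 i α, hf'def]
        simp only
        ring

end Part3

/-- exactness in the main example: the sequence
`0 ← F̄_{A'} ←(j*)- F̄^I_{A'} ←(∇*)- F̄^{MI}_{A'}` is exact: `j*` is surjective
onto finitely supported families, `j* ∘ ∇* = 0`, and `ker j* = im ∇*`
(so `F̄^I_{A'}/im ∇* ≅ F̄_{A'}`). -/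
theorem stmt_19
    {F : Type*} [CommRing F] [Algebra ℚ F] {m : ℕ} {A' : Type*}
    (D : Fin m → Derivation ℚ F F)
    (hDcomm : ∀ μ ν (f : F), D μ (D ν f) = D ν (D μ f)) :
    (∀ g : A' → F, {α : A' | g α ≠ 0}.Finite →
      ∃ f : (Fin m → ℕ) → A' → F,
        {p : (Fin m → ℕ) × A' | f p.1 p.2 ≠ 0}.Finite ∧
        ∀ α : A', jstarEx D f α = g α)
    ∧ (∀ χ : Fin m → (Fin m → ℕ) → A' → F,
        {p : Fin m × (Fin m → ℕ) × A' | χ p.1 p.2.1 p.2.2 ≠ 0}.Finite →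
        ∀ α : A', jstarEx D (nablaStarEx D χ) α = 0)
    ∧ (∀ f : (Fin m → ℕ) → A' → F,
        {p : (Fin m → ℕ) × A' | f p.1 p.2 ≠ 0}.Finite →
        (∀ α : A', jstarEx D f α = 0) →
        ∃ χ : Fin m → (Fin m → ℕ) → A' → F,
          {p : Fin m × (Fin m → ℕ) × A' | χ p.1 p.2.1 p.2.2 ≠ 0}.Finite ∧
          ∀ (i : Fin m → ℕ) (α : A'), f i α = nablaStarEx D χ i α) := by
  
  classical
  refine ⟨?_, ?_, ?_⟩
  · intro g hg
    refine ⟨fun i α => if i = (fun _ => 0) then g α else 0, ?_, ?_⟩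
    · apply Set.Finite.subset ((Set.finite_singleton (fun _ : Fin m => (0:ℕ))).prod hg)
      rintro ⟨i, α⟩ hp
      simp only [Set.mem_setOf_eq] at hp
      by_cases h : i = (fun _ => 0)
      · refine ⟨h, ?_⟩
        intro hgα
        apply hp
        rw [if_pos h, hgα]
      · rw [if_neg h] at hp
        exact absurd rfl hp
    · intro α
      have hs := jstarEx_single D (f := fun i α => if i = (fun _ => 0) then g α else 0)
        (α := α) (fun i hi => if_neg hi)
      rw [hs]
      simp
  · intro χ hχ α
    exact part2 D hDcomm χ hχ α
  · intro f hf hker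
    obtain ⟨n, hn⟩ : ∃ n, ∀ (i : Fin m → ℕ) (α : A'), n ≤ msize i → f i α = 0 := by
      refine ⟨(hf.toFinset.image (fun p => msize p.1)).sup id + 1, ?_⟩
      intro i α hi
      by_contra hc
      have hmem : (i, α) ∈ hf.toFinset := hf.mem_toFinset.mpr hc
      have hle : msize i ≤ (hf.toFinset.image (fun p => msize p.1)).sup id :=
        Finset.le_sup (f := id) (Finset.mem_image_of_mem _ hmem)
      omega
    exact part3_aux D hDcomm n f hf hn hker
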